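/- Suppose ℙ satisfies the 'usual conditions', 𝔼(Σ_x ω_{0,x}|x|²) < ∞, and 𝔼(1/ω_{0,ê_i}) < ∞ for i = 1,…,d. Then the limiting Brownian motion in the quenched invariance principle for M_n := Ψ(ω,X_n) is non-degenerate; explicitly, there is c > 0 such that E_ℚ E_ω^0[(λ·Ψ(ω,X_1))²] ≥ c|λ|² for every λ ∈ ℝ^d. -/

import Mathlib

open MeasureTheory Filter Topology Set
open scoped ENNReal NNReal

noncomputable section

namespace RCM

/-- Vertices of the lattice `ℤ^d`. -/
abbrev V (d : ℕ) := Fin d → ℤ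

/-- Euclidean norm of a vector in `ℝ^d`. -/
def rnorm {d : ℕ} (y : Fin d → ℝ) : ℝ := Real.sqrt (∑ i, (y i) ^ 2)

/-- The canonical embedding `ℤ^d → ℝ^d`. -/
def toR {d : ℕ} (x : V d) : Fin d → ℝ := fun i => (x i : ℝ)

/-- Euclidean norm of a lattice vector. -/
def vnorm {d : ℕ} (x : V d) : ℝ := rnorm (toR x)

/-- The `i`-th coordinate unit vector of `ℤ^d`. -/
def unit {d : ℕ} (i : Fin d) : V d := fun j => if j = i then 1 else 0

/-- Nearest-neighbour adjacency on `ℤ^d`. -/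
def adj {d : ℕ} (x y : V d) : Prop := (∑ i, |x i - y i|) = 1

/-- A configuration of conductances on `ℤ^d`: nonnegative, symmetric, with
`π_ω(x) = ∑_y ω_{xy} ∈ (0,∞)` for every `x`. -/
structure Cfg (d : ℕ) where
  w : V d → V d → ℝ
  nonneg : ∀ x y, 0 ≤ w x y
  symm : ∀ x y, w x y = w y x
  summ : ∀ x, Summable fun y => w x y
  pos : ∀ x, 0 < ∑' y, w x y

variable {d : ℕ}

/-- The product σ-algebra on the space of conductance configurations. -/
instance : MeasurableSpace (Cfg d) := MeasurableSpace.comap Cfg.w inferInstance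

/-- `π_ω(x) := ∑_y ω_{xy}`. -/
def piC (ω : Cfg d) (x : V d) : ℝ := ∑' y, ω.w x y

/-- The one-step transition probabilities `P_ω(x,y) = ω_{xy}/π_ω(x)` of the random walk
among the conductances `ω`. -/
def step (ω : Cfg d) (x y : V d) : ℝ := ω.w x y / piC ω x

/-- `n`-step transition probabilities `P_ω^n(x,y)`. -/
def Pn (ω : Cfg d) : ℕ → V d → V d → ℝ
  | 0, x, y => if x = y then 1 else 0
  | n + 1, x, y => ∑' z, Pn ω n x z * step ω z y

/-- The shift `τ_z` acting on configurations: `(τ_zω)_{xy} = ω_{x+z,y+z}`. -/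
def shiftC (z : V d) (ω : Cfg d) : Cfg d where
  w x y := ω.w (x + z) (y + z)
  nonneg x y := ω.nonneg _ _
  symm x y := ω.symm _ _
  summ x := by
    have h := (Equiv.addRight z).summable_iff (f := fun y => ω.w (x + z) y)
    simpa [Function.comp_def] using h.mpr (ω.summ (x + z))
  pos x := by
    have h := (Equiv.addRight z).tsum_eq (f := fun y => ω.w (x + z) y)
    simp only [Equiv.coe_addRight] at h
    calc (0:ℝ) < ∑' y, ω.w (x + z) y := ω.pos (x + z)
    _ = ∑' y, ω.w (x + z) (y + z) := h.symm

/-- The law of the discrete-time random walk among the conductances `ω` started at `x₀`,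
characterized through its cylinder probabilities. -/
def IsPathLaw (ω : Cfg d) (x₀ : V d) (μ : Measure (ℕ → V d)) : Prop :=
  IsProbabilityMeasure μ ∧
  ∀ (n : ℕ) (p : ℕ → V d),
    μ {X | ∀ i ≤ n, X i = p i} =
      ENNReal.ofReal ((if p 0 = x₀ then (1:ℝ) else 0) *
        ∏ i ∈ Finset.range n, step ω (p i) (p (i + 1)))

/-- The measure `ℚ(dω) = Z⁻¹ π_ω(0) ℙ(dω)`. -/
def Qmeas (P : Measure (Cfg d)) : Measure (Cfg d) :=
  (ENNReal.ofReal (∫ ω, piC ω 0 ∂P))⁻¹ •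
    P.withDensity fun ω => ENNReal.ofReal (piC ω 0)

/-- Bounded measurable real functions on the space of environments. -/
def BddMeas (f : Cfg d → ℝ) : Prop := Measurable f ∧ ∃ C, ∀ ω, |f ω| ≤ C

/-- The "usual conditions" on an environment law: a translation-invariant probability
measure with `𝔼 π_ω(0) < ∞`, irreducible, and ergodic with respect to translations. -/
structure UsualConds (P : Measure (Cfg d)) : Prop where
  prob : IsProbabilityMeasure P
  inv : ∀ z : V d, MeasurePreserving (shiftC z) P P
  integ : Integrable (fun ω => piC ω 0) P
  irred : ∀ x : V d, P {ω | ∃ n, 0 < Pn ω n 0 x} = 1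
  erg : ∀ A : Set (Cfg d), MeasurableSet A → (∀ z, shiftC z ⁻¹' A = A) → P A = 0 ∨ P A = 1

/-- The transition kernel `𝒫` of the environment seen from the particle, applied to a
function `g`: `(𝒫 g)(ω) = ∑_x P_ω(0,x) g(τ_x ω)`. -/
def envK (g : Cfg d → ℝ) (ω : Cfg d) : ℝ := ∑' x, step ω 0 x * g (shiftC x ω)

/-- A local function of the environment: a bounded continuous function of finitely many
conductances. -/
def IsLocal (φ : Cfg d → (Fin d → ℝ)) : Prop :=
  (∃ C, ∀ ω, rnorm (φ ω) ≤ C) ∧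
  ∃ (S : Finset (V d × V d)) (g : ((V d × V d) → ℝ) → Fin d → ℝ),
    Continuous g ∧ ∀ ω, φ ω = g fun e => if e ∈ S then ω.w e.1 e.2 else 0

/-- The gradient `∇φ(ω,x) := φ(τ_xω) − φ(ω)` of a function of the environment. -/
def grad (φ : Cfg d → (Fin d → ℝ)) (ω : Cfg d) (x : V d) : Fin d → ℝ :=
  φ (shiftC x ω) - φ ω

/-- The squared `L²`-norm `𝔼(∑_x ω_{0,x} |u(ω,x)|²)` of a vector field. -/
def energy (P : Measure (Cfg d)) (u : Cfg d → V d → Fin d → ℝ) : ℝ≥0∞ :=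
  ∫⁻ ω, ∑' x, ENNReal.ofReal (ω.w 0 x * rnorm (u ω x) ^ 2) ∂P

/-- The Dirichlet functional `φ ↦ 𝔼(∑_x ω_{0,x} |x + ∇_xφ(ω)|²)`. -/
def dirichlet (P : Measure (Cfg d)) (φ : Cfg d → (Fin d → ℝ)) : ℝ≥0∞ :=
  energy P fun ω x => toR x + grad φ ω x

/-- The infimum of the Dirichlet functional over local functions. -/
def dirichletInf (P : Measure (Cfg d)) : ℝ≥0∞ :=
  ⨅ φ : {φ : Cfg d → Fin d → ℝ // IsLocal φ}, dirichlet P φ.1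

/-- `χ` is the corrector for the environment law `P`: a shift-covariant measurable
function which is the `L²`-limit of the gradients of some minimizing sequence of the
Dirichlet functional. -/
def IsCorrector (P : Measure (Cfg d)) (χ : Cfg d → V d → Fin d → ℝ) : Prop :=
  (∀ x, Measurable fun ω => χ ω x) ∧
  (∀ ω, χ ω 0 = 0) ∧
  (∀ ω x z, χ ω (x + z) - χ ω x = χ (shiftC x ω) z) ∧
  ∃ φs : ℕ → Cfg d → Fin d → ℝ,
    (∀ n, IsLocal (φs n)) ∧
    Tendsto (fun n => dirichlet P (φs n)) atTop (𝓝 (dirichletInf P)) ∧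
    Tendsto (fun n => energy P fun ω x => grad (φs n) ω x - χ ω x) atTop (𝓝 0)

/-- The harmonic coordinate `Ψ(ω,x) := x + χ(ω,x)`. -/
def Psi (χ : Cfg d → V d → Fin d → ℝ) (ω : Cfg d) (x : V d) : Fin d → ℝ :=
  toR x + χ ω x

/-- The second-moment condition `𝔼(∑_x ω_{0,x}|x|²) < ∞`. -/
def SecondMoment (P : Measure (Cfg d)) : Prop :=
  ∫⁻ ω, ∑' x, ENNReal.ofReal (ω.w 0 x * vnorm x ^ 2) ∂P < ⊤

/-- The inverse-moment condition `𝔼(1/ω_{0,x}) < ∞`. -/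
def InvMoment (P : Measure (Cfg d)) (x : V d) : Prop :=
  ∫⁻ ω, (ENNReal.ofReal (ω.w 0 x))⁻¹ ∂P < ⊤

lemma measurable_w (x y : V d) : Measurable fun ω : Cfg d => ω.w x y := by
  have h : Measurable (Cfg.w : Cfg d → (V d → V d → ℝ)) :=
    measurable_iff_comap_le.mpr le_rfl
  exact ((measurable_pi_apply y).comp ((measurable_pi_apply x).comp h))

lemma measurable_shiftC (z : V d) : Measurable (shiftC z : Cfg d → Cfg d) := by
  have h : Measurable fun ω : Cfg d => (shiftC z ω).w :=
    measurable_pi_lambda _ fun x => measurable_pi_lambda _ fun y => measurable_w (x + z) (y + z)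
  rw [measurable_iff_comap_le]
  calc MeasurableSpace.comap (shiftC z) (MeasurableSpace.comap Cfg.w inferInstance)
      = MeasurableSpace.comap (Cfg.w ∘ shiftC z) inferInstance :=
        MeasurableSpace.comap_comp
    _ ≤ _ := h.comap_le

lemma w_nonneg (ω : Cfg d) (x y : V d) : 0 ≤ ω.w x y := ω.nonneg x y

lemma piC_pos (ω : Cfg d) (x : V d) : 0 < piC ω x := ω.pos x

/-- ENNReal version of `piC`. -/
def piE (ω : Cfg d) (x : V d) : ℝ≥0∞ := ∑' y, ENNReal.ofReal (ω.w x y)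

lemma ofReal_piC (ω : Cfg d) (x : V d) : ENNReal.ofReal (piC ω x) = piE ω x :=
  ENNReal.ofReal_tsum_of_nonneg (fun y => ω.nonneg x y) (ω.summ x)

lemma piC_eq_toReal (ω : Cfg d) (x : V d) : piC ω x = (piE ω x).toReal := by
  rw [← ofReal_piC, ENNReal.toReal_ofReal (le_of_lt (piC_pos ω x))]

lemma measurable_piE (x : V d) : Measurable fun ω : Cfg d => piE ω x :=
  Measurable.ennreal_tsum fun y => (measurable_w x y).ennreal_ofReal

lemma measurable_piC (x : V d) : Measurable fun ω : Cfg d => piC ω x := by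
  simp only [piC_eq_toReal]
  exact (measurable_piE x).ennreal_toReal

lemma measurable_step (x y : V d) : Measurable fun ω : Cfg d => step ω x y :=
  (measurable_w x y).div (measurable_piC x)

lemma rnorm_nonneg (y : Fin d → ℝ) : 0 ≤ rnorm y := Real.sqrt_nonneg _

lemma rnorm_sq (y : Fin d → ℝ) : rnorm y ^ 2 = ∑ i, y i ^ 2 :=
  Real.sq_sqrt (Finset.sum_nonneg fun i _ => sq_nonneg _)

lemma dot_sq_le (lam y : Fin d → ℝ) :
    (∑ i, lam i * y i) ^ 2 ≤ (∑ i, lam i ^ 2) * rnorm y ^ 2 := by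
  rw [rnorm_sq]
  exact Finset.sum_mul_sq_le_sq_mul_sq _ _ _

lemma summable_of_tsum_ofReal_ne_top {ι : Type*} [Countable ι] (g : ι → ℝ)
    (h0 : ∀ x, 0 ≤ g x) (h : (∑' x, ENNReal.ofReal (g x)) ≠ ⊤) : Summable g := by
  have h2 : Summable fun x => (g x).toNNReal := by
    rw [← ENNReal.tsum_coe_ne_top_iff_summable]
    simpa [ENNReal.ofReal] using h
  have : (fun x => ((g x).toNNReal : ℝ)) = g := by
    funext x; exact Real.coe_toNNReal _ (h0 x)
  rw [← this]
  exact NNReal.summable_coe.mpr h2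

/-- real nonneg tsum as toReal of the ENNReal tsum, unconditionally. -/
lemma tsum_eq_toReal {ι : Type*} [Countable ι] (g : ι → ℝ) (h0 : ∀ x, 0 ≤ g x) :
    ∑' x, g x = (∑' x, ENNReal.ofReal (g x)).toReal := by
  by_cases hs : Summable g
  · rw [← ENNReal.ofReal_tsum_of_nonneg h0 hs, ENNReal.toReal_ofReal (tsum_nonneg h0)]
  · rw [tsum_eq_zero_of_not_summable hs]
    have htop : (∑' x, ENNReal.ofReal (g x)) = ⊤ := by
      by_contra h
      exact hs (summable_of_tsum_ofReal_ne_top g h0 h)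
    rw [htop]; rfl


lemma rpow_half_sq (x : ℝ≥0∞) : (x ^ (2⁻¹:ℝ)) ^ (2:ℝ) = x := by
  rw [← ENNReal.rpow_mul]; norm_num

/-- Cauchy–Schwarz with weight `ω_{0e}`. -/
lemma holder_key (P : Measure (Cfg d)) (e : V d) (h : Cfg d → ℝ)
    (hm : Measurable h) (hae : ∀ᵐ ω ∂P, 0 < ω.w 0 e) :
    (∫⁻ ω, ENNReal.ofReal |h ω| ∂P) ^ 2 ≤
      (∫⁻ ω, ENNReal.ofReal (ω.w 0 e * h ω ^ 2) ∂P) *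
        ∫⁻ ω, (ENNReal.ofReal (ω.w 0 e))⁻¹ ∂P := by
  set f : Cfg d → ℝ≥0∞ := fun ω => (ENNReal.ofReal (ω.w 0 e * h ω ^ 2)) ^ (2⁻¹:ℝ) with hf
  set g : Cfg d → ℝ≥0∞ := fun ω => ((ENNReal.ofReal (ω.w 0 e))⁻¹) ^ (2⁻¹:ℝ) with hg
  have hmf : Measurable f :=
    (ENNReal.continuous_rpow_const.measurable).comp
      ((measurable_w 0 e).mul (hm.pow_const 2)).ennreal_ofReal
  have hmg : Measurable g :=
    (ENNReal.continuous_rpow_const.measurable).comp (measurable_w 0 e).ennreal_ofReal.inv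
  have hpq : (2:ℝ).HolderConjugate 2 := Real.HolderConjugate.two_two
  have key := ENNReal.lintegral_mul_le_Lp_mul_Lq P hpq hmf.aemeasurable hmg.aemeasurable
  have hfg : ∀ᵐ ω ∂P, ENNReal.ofReal |h ω| = (f * g) ω := by
    filter_upwards [hae] with ω hw
    have hw0 : ENNReal.ofReal (ω.w 0 e) ≠ 0 := by
      simp [ENNReal.ofReal_eq_zero, not_le, hw]
    simp only [Pi.mul_apply, hf, hg]
    rw [← ENNReal.mul_rpow_of_nonneg _ _ (by norm_num : (0:ℝ) ≤ 2⁻¹)]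
    have : ENNReal.ofReal (ω.w 0 e * h ω ^ 2) * (ENNReal.ofReal (ω.w 0 e))⁻¹
        = ENNReal.ofReal |h ω| ^ (2:ℝ) := by
      rw [ENNReal.ofReal_mul hw.le]
      rw [mul_comm, ← mul_assoc, ENNReal.inv_mul_cancel hw0 ENNReal.ofReal_ne_top, one_mul]
      rw [← sq_abs, ENNReal.ofReal_pow (abs_nonneg _)]
      rw [← ENNReal.rpow_natCast]
      norm_num
    rw [this, ← ENNReal.rpow_mul]
    norm_num
  have h1 : ∫⁻ ω, ENNReal.ofReal |h ω| ∂P = ∫⁻ ω, (f * g) ω ∂P := lintegral_congr_ae hfg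
  have hf2 : ∀ ω, f ω ^ (2:ℝ) = ENNReal.ofReal (ω.w 0 e * h ω ^ 2) := fun ω => rpow_half_sq _
  have hg2 : ∀ ω, g ω ^ (2:ℝ) = (ENNReal.ofReal (ω.w 0 e))⁻¹ := fun ω => rpow_half_sq _
  simp only [hf2, hg2] at key
  have h2 : (∫⁻ ω, ENNReal.ofReal |h ω| ∂P) ≤
      (∫⁻ ω, ENNReal.ofReal (ω.w 0 e * h ω ^ 2) ∂P) ^ (1/2:ℝ) *
        (∫⁻ ω, (ENNReal.ofReal (ω.w 0 e))⁻¹ ∂P) ^ (1/2:ℝ) := h1 ▸ key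
  calc (∫⁻ ω, ENNReal.ofReal |h ω| ∂P) ^ 2
      ≤ ((∫⁻ ω, ENNReal.ofReal (ω.w 0 e * h ω ^ 2) ∂P) ^ (1/2:ℝ) *
        (∫⁻ ω, (ENNReal.ofReal (ω.w 0 e))⁻¹ ∂P) ^ (1/2:ℝ)) ^ 2 := pow_le_pow_left' h2 2
    _ = _ := by
        rw [mul_pow, ← ENNReal.rpow_natCast (_ ^ (1/2:ℝ)), ← ENNReal.rpow_natCast (_ ^ (1/2:ℝ)),
          ← ENNReal.rpow_mul, ← ENNReal.rpow_mul]
        norm_num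

lemma abs_le_rnorm (y : Fin d → ℝ) (i : Fin d) : |y i| ≤ rnorm y := by
  rw [← Real.sqrt_sq_eq_abs]
  exact Real.sqrt_le_sqrt (Finset.single_le_sum (f := fun j => y j ^ 2)
    (fun j _ => sq_nonneg _) (Finset.mem_univ i))

lemma IsLocal.measurable' {φ : Cfg d → Fin d → ℝ} (h : IsLocal φ) : Measurable φ := by
  obtain ⟨-, S, g, hg, hrep⟩ := h
  have : φ = fun ω => g fun e => if e ∈ S then ω.w e.1 e.2 else 0 := funext hrep
  rw [this]
  apply hg.measurable.comp
  apply measurable_pi_lambda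
  intro e
  by_cases he : e ∈ S
  · simpa [he] using measurable_w e.1 e.2
  · simpa [he] using (measurable_const : Measurable fun _ : Cfg d => (0:ℝ))

lemma IsLocal.bound {φ : Cfg d → Fin d → ℝ} (h : IsLocal φ) :
    ∃ C, ∀ ω i, |φ ω i| ≤ C := by
  obtain ⟨⟨C, hC⟩, -⟩ := h
  exact ⟨C, fun ω i => (abs_le_rnorm _ i).trans (hC ω)⟩

lemma integral_shift {P : Measure (Cfg d)} {z : V d}
    (hP : MeasurePreserving (shiftC z) P P) {F : Cfg d → ℝ}
    (hF : AEStronglyMeasurable F P) :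
    ∫ ω, F (shiftC z ω) ∂P = ∫ ω, F ω ∂P := by
  have hF' : AEStronglyMeasurable F (Measure.map (shiftC z) P) := by
    rw [hP.map_eq]; exact hF
  rw [← integral_map hP.measurable.aemeasurable hF', hP.map_eq]

lemma ae_w_pos {P : Measure (Cfg d)} {e : V d} (hB : InvMoment P e) :
    ∀ᵐ ω ∂P, 0 < ω.w 0 e := by
  have := ae_lt_top (measurable_w (d := d) 0 e).ennreal_ofReal.inv hB.ne
  filter_upwards [this] with ω hω
  simp only [Pi.inv_apply] at hω
  rw [ENNReal.inv_lt_top, ENNReal.ofReal_pos] at hω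
  exact hω

lemma E_le_energy (P : Measure (Cfg d)) (lam : Fin d → ℝ) (u : Cfg d → V d → Fin d → ℝ)
    (e : V d) :
    ∫⁻ ω, ENNReal.ofReal (ω.w 0 e * (∑ j, lam j * u ω e j) ^ 2) ∂P ≤
      ENNReal.ofReal (∑ j, lam j ^ 2) * energy P u := by
  have hpt : ∀ ω : Cfg d, ENNReal.ofReal (ω.w 0 e * (∑ j, lam j * u ω e j) ^ 2) ≤
      ENNReal.ofReal (∑ j, lam j ^ 2) * ENNReal.ofReal (ω.w 0 e * rnorm (u ω e) ^ 2) := by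
    intro ω
    rw [← ENNReal.ofReal_mul (Finset.sum_nonneg fun j _ => sq_nonneg _)]
    apply ENNReal.ofReal_le_ofReal
    have h1 := dot_sq_le lam (u ω e)
    have h2 := ω.nonneg 0 e
    nlinarith [sq_nonneg (∑ j, lam j * u ω e j), rnorm_nonneg (u ω e)]
  calc ∫⁻ ω, ENNReal.ofReal (ω.w 0 e * (∑ j, lam j * u ω e j) ^ 2) ∂P
      ≤ ∫⁻ ω, ENNReal.ofReal (∑ j, lam j ^ 2) *
          ENNReal.ofReal (ω.w 0 e * rnorm (u ω e) ^ 2) ∂P := lintegral_mono hpt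
    _ = ENNReal.ofReal (∑ j, lam j ^ 2) *
          ∫⁻ ω, ENNReal.ofReal (ω.w 0 e * rnorm (u ω e) ^ 2) ∂P :=
        lintegral_const_mul' _ _ ENNReal.ofReal_ne_top
    _ ≤ ENNReal.ofReal (∑ j, lam j ^ 2) * energy P u := by
        apply mul_le_mul_right
        exact lintegral_mono fun ω => ENNReal.le_tsum e

set_option maxHeartbeats 1000000 in
lemma corrector_mean_zero {P : Measure (Cfg d)} (hP : UsualConds P)
    {χ : Cfg d → V d → Fin d → ℝ} (hχ : IsCorrector P χ) {e : V d} (hB : InvMoment P e)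
    (lam : Fin d → ℝ) :
    Integrable (fun ω => ∑ j, lam j * χ ω e j) P ∧
      ∫ ω, (∑ j, lam j * χ ω e j) ∂P = 0 := by
  haveI := hP.prob
  obtain ⟨hχm, hχ0, hχcov, φs, hloc, hdir, hen⟩ := hχ
  set v : Cfg d → ℝ := fun ω => ∑ j, lam j * χ ω e j with hv
  set u : ℕ → Cfg d → ℝ := fun n ω => ∑ j, lam j * grad (φs n) ω e j with hu
  have hvm : Measurable v := Finset.measurable_sum _ fun j _ =>
    measurable_const.mul ((measurable_pi_apply j).comp (hχm e))
  have hφm : ∀ n, Measurable (φs n) := fun n => (hloc n).measurable'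
  have hgm : ∀ n j, Measurable fun ω => grad (φs n) ω e j := by
    intro n j
    simp only [grad, Pi.sub_apply]
    exact ((measurable_pi_apply j).comp ((hφm n).comp (measurable_shiftC e))).sub
      ((measurable_pi_apply j).comp (hφm n))
  have hum : ∀ n, Measurable (u n) := fun n => Finset.measurable_sum _ fun j _ =>
    measurable_const.mul (hgm n j)
  -- bounds for u n
  have hubd : ∀ n, ∃ K, 0 ≤ K ∧ ∀ ω, |u n ω| ≤ K := by
    intro n
    obtain ⟨C, hC⟩ := (hloc n).bound
    refine ⟨∑ j, |lam j| * (2 * |C|), Finset.sum_nonneg fun j _ => by positivity, fun ω => ?_⟩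
    calc |u n ω| ≤ ∑ j, |lam j * grad (φs n) ω e j| := Finset.abs_sum_le_sum_abs _ _
      _ ≤ ∑ j, |lam j| * (2 * |C|) := by
          apply Finset.sum_le_sum
          intro j _
          rw [abs_mul]
          apply mul_le_mul_of_nonneg_left _ (abs_nonneg _)
          have h1 := hC (shiftC e ω) j
          have h2 := hC ω j
          have h3 : |φs n ω j| ≤ |C| := h2.trans (le_abs_self C)
          have h4 : |φs n (shiftC e ω) j| ≤ |C| := h1.trans (le_abs_self C)
          calc |grad (φs n) ω e j| = |φs n (shiftC e ω) j - φs n ω j| := by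
                simp [grad, Pi.sub_apply]
            _ ≤ |φs n (shiftC e ω) j| + |φs n ω j| := abs_sub _ _
            _ ≤ 2 * |C| := by linarith
  have hui : ∀ n, Integrable (u n) P := by
    intro n
    obtain ⟨K, hK0, hK⟩ := hubd n
    exact Integrable.mono' (integrable_const K) (hum n).aestronglyMeasurable
      (ae_of_all _ fun ω => by simpa [Real.norm_eq_abs] using hK ω)
  -- u n has mean zero
  have hu0 : ∀ n, ∫ ω, u n ω ∂P = 0 := by
    intro n
    obtain ⟨C, hC⟩ := (hloc n).bound
    set F : Cfg d → ℝ := fun ω => ∑ j, lam j * φs n ω j with hF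
    have hFm : Measurable F := Finset.measurable_sum _ fun j _ =>
      measurable_const.mul ((measurable_pi_apply j).comp (hφm n))
    have hFbd : ∀ ω, |F ω| ≤ ∑ j, |lam j| * |C| := by
      intro ω
      calc |F ω| ≤ ∑ j, |lam j * φs n ω j| := Finset.abs_sum_le_sum_abs _ _
        _ ≤ ∑ j, |lam j| * |C| := Finset.sum_le_sum fun j _ => by
            rw [abs_mul]
            exact mul_le_mul_of_nonneg_left ((hC ω j).trans (le_abs_self C)) (abs_nonneg _)
    have hFi : Integrable F P := Integrable.mono' (integrable_const _)
      hFm.aestronglyMeasurable (ae_of_all _ fun ω => by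
        simpa [Real.norm_eq_abs] using hFbd ω)
    have hFsi : Integrable (fun ω => F (shiftC e ω)) P := Integrable.mono'
      (integrable_const (∑ j, |lam j| * |C|))
      (hFm.comp (measurable_shiftC e)).aestronglyMeasurable
      (ae_of_all _ fun ω => by simpa [Real.norm_eq_abs] using hFbd (shiftC e ω))
    have huF : u n = fun ω => F (shiftC e ω) - F ω := by
      funext ω
      simp only [hu, hF, grad, Pi.sub_apply, mul_sub, Finset.sum_sub_distrib]
    rw [huF, integral_sub hFsi hFi, integral_shift (hP.inv e) hFm.aestronglyMeasurable,
      sub_self]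
  -- the energy control
  set En : ℕ → ℝ≥0∞ := fun n =>
    ∫⁻ ω, ENNReal.ofReal (ω.w 0 e * (u n ω - v ω) ^ 2) ∂P with hEn
  have hEnle : ∀ n, En n ≤ ENNReal.ofReal (∑ j, lam j ^ 2) *
      energy P (fun ω x => grad (φs n) ω x - χ ω x) := by
    intro n
    have heq : ∀ ω, u n ω - v ω = ∑ j, lam j * (grad (φs n) ω e - χ ω e) j := by
      intro ω
      simp only [hu, hv, Pi.sub_apply, mul_sub, Finset.sum_sub_distrib]
    calc En n = ∫⁻ ω, ENNReal.ofReal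
          (ω.w 0 e * (∑ j, lam j * (grad (φs n) ω e - χ ω e) j) ^ 2) ∂P := by
          rw [hEn]
          exact lintegral_congr fun ω => by rw [heq ω]
      _ ≤ _ := E_le_energy P lam (fun ω x => grad (φs n) ω x - χ ω x) e
  set B : ℝ≥0∞ := ∫⁻ ω, (ENNReal.ofReal (ω.w 0 e))⁻¹ ∂P with hBdef
  have hkey : ∀ n, (∫⁻ ω, ENNReal.ofReal |u n ω - v ω| ∂P) ^ 2 ≤ En n * B :=
    fun n => holder_key P e _ ((hum n).sub hvm) (ae_w_pos hB)
  have hev : ∀ᶠ n in atTop,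
      energy P (fun ω x => grad (φs n) ω x - χ ω x) < 1 :=
    hen.eventually_lt_const (by norm_num)
  -- integrability of v
  have hvi : Integrable v P := by
    obtain ⟨n0, hn0⟩ := hev.exists
    obtain ⟨K, hK0, hK⟩ := hubd n0
    have hEfin : En n0 * B < ⊤ := by
      apply ENNReal.mul_lt_top _ hB
      calc En n0 ≤ ENNReal.ofReal (∑ j, lam j ^ 2) *
          energy P (fun ω x => grad (φs n0) ω x - χ ω x) := hEnle n0
        _ ≤ ENNReal.ofReal (∑ j, lam j ^ 2) * 1 := mul_le_mul_right hn0.le _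
        _ < ⊤ := by simp [ENNReal.ofReal_lt_top]
    have hlt : (∫⁻ ω, ENNReal.ofReal |u n0 ω - v ω| ∂P) < ⊤ := by
      by_contra hc
      rw [not_lt, top_le_iff] at hc
      have h := hkey n0
      rw [hc, ENNReal.top_pow (by norm_num)] at h
      exact hEfin.ne (top_le_iff.mp h)
    have hfin : (∫⁻ ω, ENNReal.ofReal |v ω| ∂P) < ⊤ := by
      have hle : ∀ ω, ENNReal.ofReal |v ω| ≤
          ENNReal.ofReal |u n0 ω| + ENNReal.ofReal |u n0 ω - v ω| := by
        intro ω
        rw [← ENNReal.ofReal_add (abs_nonneg _) (abs_nonneg _)]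
        apply ENNReal.ofReal_le_ofReal
        calc |v ω| = |u n0 ω - (u n0 ω - v ω)| := by ring_nf
          _ ≤ |u n0 ω| + |u n0 ω - v ω| := abs_sub _ _
      calc (∫⁻ ω, ENNReal.ofReal |v ω| ∂P)
          ≤ ∫⁻ ω, (ENNReal.ofReal |u n0 ω| + ENNReal.ofReal |u n0 ω - v ω|) ∂P :=
            lintegral_mono hle
        _ = (∫⁻ ω, ENNReal.ofReal |u n0 ω| ∂P) +
            ∫⁻ ω, ENNReal.ofReal |u n0 ω - v ω| ∂P :=
            lintegral_add_left ((hum n0).abs.ennreal_ofReal) _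
        _ < ⊤ := by
            apply ENNReal.add_lt_top.mpr
            constructor
            · calc (∫⁻ ω, ENNReal.ofReal |u n0 ω| ∂P) ≤ ∫⁻ _, ENNReal.ofReal K ∂P :=
                  lintegral_mono fun ω => ENNReal.ofReal_le_ofReal (hK ω)
                _ = ENNReal.ofReal K := by simp
                _ < ⊤ := ENNReal.ofReal_lt_top
            · exact hlt
    refine ⟨hvm.aestronglyMeasurable, ?_⟩
    rw [hasFiniteIntegral_iff_norm]
    simpa [Real.norm_eq_abs] using hfin
  refine ⟨hvi, ?_⟩
  -- mean zero via limit
  set s : ℕ → ℝ := fun n => ((ENNReal.ofReal (∑ j, lam j ^ 2) *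
      energy P (fun ω x => grad (φs n) ω x - χ ω x)) * B).toReal with hs
  have hsq : ∀ᶠ n in atTop, |∫ ω, v ω ∂P| ^ 2 ≤ s n := by
    filter_upwards [hev] with n hn
    have hfin2 : (ENNReal.ofReal (∑ j, lam j ^ 2) *
        energy P (fun ω x => grad (φs n) ω x - χ ω x)) * B ≠ ⊤ := by
      apply ENNReal.mul_ne_top _ hB.ne
      apply ENNReal.mul_ne_top ENNReal.ofReal_ne_top hn.ne_top
    have h1 : ∫ ω, (u n ω - v ω) ∂P = -∫ ω, v ω ∂P := by
      rw [integral_sub (hui n) hvi, hu0 n, zero_sub]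
    have h2 : |∫ ω, v ω ∂P| ≤ (∫⁻ ω, ENNReal.ofReal |u n ω - v ω| ∂P).toReal := by
      have := norm_integral_le_lintegral_norm (μ := P) (fun ω => u n ω - v ω)
      rw [h1] at this
      simpa [Real.norm_eq_abs] using this
    have h3 : (En n * B) ≤ (ENNReal.ofReal (∑ j, lam j ^ 2) *
        energy P (fun ω x => grad (φs n) ω x - χ ω x)) * B :=
      mul_le_mul_left (hEnle n) _
    calc |∫ ω, v ω ∂P| ^ 2
        ≤ ((∫⁻ ω, ENNReal.ofReal |u n ω - v ω| ∂P).toReal) ^ 2 := by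
          apply pow_le_pow_left₀ (abs_nonneg _) h2
      _ = ((∫⁻ ω, ENNReal.ofReal |u n ω - v ω| ∂P) ^ 2).toReal := by
          rw [ENNReal.toReal_pow]
      _ ≤ s n := by
          rw [hs]
          exact ENNReal.toReal_mono hfin2 ((hkey n).trans h3)
  have hs0 : Tendsto s atTop (𝓝 0) := by
    have h1 : Tendsto (fun n => (ENNReal.ofReal (∑ j, lam j ^ 2) *
        energy P (fun ω x => grad (φs n) ω x - χ ω x)) * B) atTop (𝓝 0) := by
      have h2 : Tendsto (fun n => ENNReal.ofReal (∑ j, lam j ^ 2) *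
          energy P (fun ω x => grad (φs n) ω x - χ ω x)) atTop (𝓝 0) := by
        have := ENNReal.Tendsto.const_mul (a := ENNReal.ofReal (∑ j, lam j ^ 2)) hen
          (Or.inr ENNReal.ofReal_ne_top)
        simpa using this
      have := ENNReal.Tendsto.mul_const (b := B) h2 (Or.inr hB.ne)
      simpa using this
    have := (ENNReal.tendsto_toReal (a := 0) (by simp)).comp h1
    rw [ENNReal.toReal_zero] at this
    exact this
  have hfinal : |∫ ω, v ω ∂P| ^ 2 ≤ 0 := ge_of_tendsto hs0 hsq
  have : |∫ ω, v ω ∂P| ^ 2 = 0 := le_antisymm hfinal (sq_nonneg _)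
  have := pow_eq_zero_iff (two_ne_zero) |>.mp this
  exact abs_eq_zero.mp this

lemma ofReal_dot_le (lam y : Fin d → ℝ) {w : ℝ} (hw : 0 ≤ w) :
    ENNReal.ofReal (w * (∑ j, lam j * y j) ^ 2) ≤
      ENNReal.ofReal (∑ j, lam j ^ 2) * ENNReal.ofReal (w * rnorm y ^ 2) := by
  rw [← ENNReal.ofReal_mul (Finset.sum_nonneg fun j _ => sq_nonneg _)]
  apply ENNReal.ofReal_le_ofReal
  have h1 := dot_sq_le lam y
  nlinarith [sq_nonneg (∑ j, lam j * y j), rnorm_nonneg y]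

lemma T_le_energy (P : Measure (Cfg d)) (lam : Fin d → ℝ) (u : Cfg d → V d → Fin d → ℝ) :
    ∫⁻ ω, ∑' x, ENNReal.ofReal (ω.w 0 x * (∑ j, lam j * u ω x j) ^ 2) ∂P ≤
      ENNReal.ofReal (∑ j, lam j ^ 2) * energy P u := by
  calc ∫⁻ ω, ∑' x, ENNReal.ofReal (ω.w 0 x * (∑ j, lam j * u ω x j) ^ 2) ∂P
      ≤ ∫⁻ ω, ∑' x, ENNReal.ofReal (∑ j, lam j ^ 2) *
          ENNReal.ofReal (ω.w 0 x * rnorm (u ω x) ^ 2) ∂P :=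
        lintegral_mono fun ω => ENNReal.tsum_le_tsum fun x =>
          ofReal_dot_le lam (u ω x) (ω.nonneg 0 x)
    _ = ∫⁻ ω, ENNReal.ofReal (∑ j, lam j ^ 2) *
          ∑' x, ENNReal.ofReal (ω.w 0 x * rnorm (u ω x) ^ 2) ∂P := by
        simp_rw [ENNReal.tsum_mul_left]
    _ = ENNReal.ofReal (∑ j, lam j ^ 2) * energy P u :=
        lintegral_const_mul' _ _ ENNReal.ofReal_ne_top

lemma rnorm_sub_sq_le (a b : Fin d → ℝ) :
    rnorm (a - b) ^ 2 ≤ 2 * rnorm a ^ 2 + 2 * rnorm b ^ 2 := by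
  simp only [rnorm_sq]
  calc ∑ i, (a - b) i ^ 2 ≤ ∑ i, (2 * a i ^ 2 + 2 * b i ^ 2) := by
        apply Finset.sum_le_sum
        intro i _
        simp only [Pi.sub_apply]
        nlinarith [sq_nonneg (a i + b i)]
    _ = 2 * ∑ i, a i ^ 2 + 2 * ∑ i, b i ^ 2 := by
        rw [Finset.sum_add_distrib, ← Finset.mul_sum, ← Finset.mul_sum]

lemma measurable_energy_integrand {u : Cfg d → V d → Fin d → ℝ}
    (hu : ∀ x j, Measurable fun ω => u ω x j) :
    Measurable fun ω : Cfg d => ∑' x, ENNReal.ofReal (ω.w 0 x * rnorm (u ω x) ^ 2) := by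
  apply Measurable.ennreal_tsum
  intro x
  apply Measurable.ennreal_ofReal
  apply (measurable_w 0 x).mul
  apply Measurable.pow_const
  have : (fun ω => rnorm (u ω x)) = fun ω => Real.sqrt (∑ j, u ω x j ^ 2) := by
    funext ω; rfl
  rw [this]
  exact Real.continuous_sqrt.measurable.comp
    (Finset.measurable_sum _ fun j _ => (hu x j).pow_const 2)

lemma energy_sub_le (P : Measure (Cfg d)) {a b : Cfg d → V d → Fin d → ℝ}
    (ha : Measurable fun ω => ∑' x, ENNReal.ofReal (ω.w 0 x * rnorm (a ω x) ^ 2)) :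
    energy P (fun ω x => a ω x - b ω x) ≤ 2 * energy P a + 2 * energy P b := by
  have hpt : ∀ ω : Cfg d, ∑' x, ENNReal.ofReal (ω.w 0 x * rnorm (a ω x - b ω x) ^ 2) ≤
      2 * (∑' x, ENNReal.ofReal (ω.w 0 x * rnorm (a ω x) ^ 2)) +
        2 * ∑' x, ENNReal.ofReal (ω.w 0 x * rnorm (b ω x) ^ 2) := by
    intro ω
    calc ∑' x, ENNReal.ofReal (ω.w 0 x * rnorm (a ω x - b ω x) ^ 2)
        ≤ ∑' x, (2 * ENNReal.ofReal (ω.w 0 x * rnorm (a ω x) ^ 2) +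
            2 * ENNReal.ofReal (ω.w 0 x * rnorm (b ω x) ^ 2)) := by
          apply ENNReal.tsum_le_tsum
          intro x
          have h1 : ω.w 0 x * rnorm (a ω x - b ω x) ^ 2 ≤
              2 * (ω.w 0 x * rnorm (a ω x) ^ 2) + 2 * (ω.w 0 x * rnorm (b ω x) ^ 2) := by
            have := rnorm_sub_sq_le (a ω x) (b ω x)
            have hw := ω.nonneg 0 x
            nlinarith [rnorm_nonneg (a ω x - b ω x)]
          calc ENNReal.ofReal (ω.w 0 x * rnorm (a ω x - b ω x) ^ 2)
              ≤ ENNReal.ofReal (2 * (ω.w 0 x * rnorm (a ω x) ^ 2) +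
                  2 * (ω.w 0 x * rnorm (b ω x) ^ 2)) := ENNReal.ofReal_le_ofReal h1
            _ = 2 * ENNReal.ofReal (ω.w 0 x * rnorm (a ω x) ^ 2) +
                2 * ENNReal.ofReal (ω.w 0 x * rnorm (b ω x) ^ 2) := by
                have hw := ω.nonneg 0 x
                have hA : (0:ℝ) ≤ 2 * (ω.w 0 x * rnorm (a ω x) ^ 2) := by
                  nlinarith [sq_nonneg (rnorm (a ω x))]
                have hB : (0:ℝ) ≤ 2 * (ω.w 0 x * rnorm (b ω x) ^ 2) := by
                  nlinarith [sq_nonneg (rnorm (b ω x))]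
                rw [ENNReal.ofReal_add hA hB,
                  ENNReal.ofReal_mul (by norm_num : (0:ℝ) ≤ 2),
                  ENNReal.ofReal_mul (by norm_num : (0:ℝ) ≤ 2),
                  ENNReal.ofReal_ofNat]
      _ = 2 * (∑' x, ENNReal.ofReal (ω.w 0 x * rnorm (a ω x) ^ 2)) +
            2 * ∑' x, ENNReal.ofReal (ω.w 0 x * rnorm (b ω x) ^ 2) := by
          rw [ENNReal.tsum_add, ENNReal.tsum_mul_left, ENNReal.tsum_mul_left]
  calc energy P (fun ω x => a ω x - b ω x)
      ≤ ∫⁻ ω, (2 * (∑' x, ENNReal.ofReal (ω.w 0 x * rnorm (a ω x) ^ 2)) +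
          2 * ∑' x, ENNReal.ofReal (ω.w 0 x * rnorm (b ω x) ^ 2)) ∂P :=
        lintegral_mono hpt
    _ = 2 * energy P a + 2 * energy P b := by
        rw [lintegral_add_left (ha.const_mul 2),
          lintegral_const_mul' _ _ (by norm_num : (2:ℝ≥0∞) ≠ ⊤),
          lintegral_const_mul' _ _ (by norm_num : (2:ℝ≥0∞) ≠ ⊤)]
        rfl

lemma energy_psi_lt_top {P : Measure (Cfg d)} (hmom : SecondMoment P)
    {χ : Cfg d → V d → Fin d → ℝ} (hχ : IsCorrector P χ) :
    energy P (fun ω x => Psi χ ω x) < ⊤ := by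
  obtain ⟨hχm, hχ0, hχcov, φs, hloc, hdir, hen⟩ := hχ
  have h0loc : IsLocal (fun _ : Cfg d => (0 : Fin d → ℝ)) :=
    ⟨⟨0, fun ω => le_of_eq (by simp [rnorm])⟩, ∅, fun _ => 0, continuous_const,
      fun ω => rfl⟩
  have hdir0 : dirichlet P (fun _ => (0 : Fin d → ℝ)) < ⊤ := by
    have heq : dirichlet P (fun _ => (0 : Fin d → ℝ)) =
        ∫⁻ ω, ∑' x, ENNReal.ofReal (ω.w 0 x * vnorm x ^ 2) ∂P := by
      unfold dirichlet energy
      apply lintegral_congr; intro ω; apply tsum_congr; intro x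
      congr 2
      simp [grad, vnorm]
    rw [heq]; exact hmom
  have hinf : dirichletInf P < ⊤ :=
    lt_of_le_of_lt (iInf_le _ (⟨_, h0loc⟩ : {φ : Cfg d → Fin d → ℝ // IsLocal φ})) hdir0
  have hev1 : ∀ᶠ n in atTop, dirichlet P (φs n) < dirichletInf P + 1 :=
    hdir.eventually_lt_const (ENNReal.lt_add_right hinf.ne one_ne_zero)
  have hev2 : ∀ᶠ n in atTop, energy P (fun ω x => grad (φs n) ω x - χ ω x) < 1 :=
    hen.eventually_lt_const (by norm_num)
  obtain ⟨n, h1, h2⟩ := (hev1.and hev2).exists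
  have hgm : ∀ x j, Measurable fun ω => grad (φs n) ω x j := by
    intro x j
    simp only [grad, Pi.sub_apply]
    exact ((measurable_pi_apply j).comp (((hloc n).measurable').comp (measurable_shiftC x))).sub
      ((measurable_pi_apply j).comp ((hloc n).measurable'))
  have hma : Measurable fun ω : Cfg d =>
      ∑' x, ENNReal.ofReal (ω.w 0 x * rnorm (toR x + grad (φs n) ω x) ^ 2) := by
    apply measurable_energy_integrand (u := fun ω x => toR x + grad (φs n) ω x)
    intro x j
    simp only [Pi.add_apply]
    exact measurable_const.add (hgm x j)
  have key := energy_sub_le P (a := fun ω x => toR x + grad (φs n) ω x)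
    (b := fun ω x => grad (φs n) ω x - χ ω x) hma
  have heq2 : energy P (fun ω x => Psi χ ω x) = energy P
      (fun ω x => (toR x + grad (φs n) ω x) - (grad (φs n) ω x - χ ω x)) := by
    unfold energy
    apply lintegral_congr; intro ω; apply tsum_congr; intro x
    congr 2
    simp only [Psi]
    abel
  rw [heq2]
  refine lt_of_le_of_lt key ?_
  have hfin1 : energy P (fun ω x => toR x + grad (φs n) ω x) < ⊤ :=
    lt_of_lt_of_le h1 (le_of_lt (ENNReal.add_lt_top.mpr ⟨hinf, ENNReal.one_lt_top⟩))
  exact ENNReal.add_lt_top.mpr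
    ⟨ENNReal.mul_lt_top (by norm_num) hfin1,
      ENNReal.mul_lt_top (by norm_num) (h2.trans ENNReal.one_lt_top)⟩

lemma step_nonneg (ω : Cfg d) (x y : V d) : 0 ≤ step ω x y :=
  div_nonneg (ω.nonneg x y) (piC_pos ω x).le

lemma unit_injective : Function.Injective (unit : Fin d → V d) := by
  intro i j h
  by_contra hne
  have := congrFun h i
  simp [unit, hne] at this

lemma integral_Q_eq {P : Measure (Cfg d)} [IsProbabilityMeasure P]
    {sq : Cfg d → V d → ℝ} (hsqm : ∀ x, Measurable fun ω => sq ω x)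
    (hsq0 : ∀ ω x, 0 ≤ sq ω x)
    (hT : ∫⁻ ω, ∑' x, ENNReal.ofReal (ω.w 0 x * sq ω x) ∂P < ⊤) :
    ∫ ω, (∑' x, step ω 0 x * sq ω x) ∂(Qmeas P) =
      (∫⁻ ω, ∑' x, ENNReal.ofReal (ω.w 0 x * sq ω x) ∂P).toReal /
        ∫ ω, piC ω 0 ∂P := by
  set f : Cfg d → ℝ := fun ω => ∑' x, step ω 0 x * sq ω x with hfdef
  have hf0 : ∀ ω, 0 ≤ f ω := fun ω =>
    tsum_nonneg fun x => mul_nonneg (step_nonneg ω 0 x) (hsq0 ω x)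
  have hfm : Measurable f := by
    have : f = fun ω => (∑' x, ENNReal.ofReal (step ω 0 x * sq ω x)).toReal := by
      funext ω
      exact tsum_eq_toReal _ fun x => mul_nonneg (step_nonneg ω 0 x) (hsq0 ω x)
    rw [this]
    exact (Measurable.ennreal_tsum fun x =>
      ((measurable_step 0 x).mul (hsqm x)).ennreal_ofReal).ennreal_toReal
  have hTm : Measurable fun ω : Cfg d => ∑' x, ENNReal.ofReal (ω.w 0 x * sq ω x) :=
    Measurable.ennreal_tsum fun x => ((measurable_w 0 x).mul (hsqm x)).ennreal_ofReal
  -- the a.e. pointwise identity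
  have hae : ∀ᵐ ω ∂P, ENNReal.ofReal (piC ω 0) * ENNReal.ofReal (f ω) =
      ∑' x, ENNReal.ofReal (ω.w 0 x * sq ω x) := by
    filter_upwards [ae_lt_top hTm hT.ne] with ω hω
    have hS : Summable fun x => ω.w 0 x * sq ω x :=
      summable_of_tsum_ofReal_ne_top _ (fun x => mul_nonneg (ω.nonneg 0 x) (hsq0 ω x)) hω.ne
    have hfω : f ω = (∑' x, ω.w 0 x * sq ω x) / piC ω 0 := by
      rw [hfdef, ← tsum_div_const]
      apply tsum_congr
      intro x
      rw [step, div_mul_eq_mul_div]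
    rw [hfω, ← ENNReal.ofReal_mul (piC_pos ω 0).le, mul_comm (piC ω 0),
      div_mul_cancel₀ _ (piC_pos ω 0).ne',
      ENNReal.ofReal_tsum_of_nonneg (fun x => mul_nonneg (ω.nonneg 0 x) (hsq0 ω x)) hS]
  have hlin : ∫⁻ ω, ENNReal.ofReal (f ω) ∂(Qmeas P) =
      (ENNReal.ofReal (∫ ω, piC ω 0 ∂P))⁻¹ *
        ∫⁻ ω, ∑' x, ENNReal.ofReal (ω.w 0 x * sq ω x) ∂P := by
    rw [Qmeas, lintegral_smul_measure,
      lintegral_withDensity_eq_lintegral_mul _ (measurable_piC 0).ennreal_ofReal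
        hfm.ennreal_ofReal]
    congr 1
    exact lintegral_congr_ae hae
  have hint : ∫ ω, f ω ∂(Qmeas P) = (∫⁻ ω, ENNReal.ofReal (f ω) ∂(Qmeas P)).toReal :=
    integral_eq_lintegral_of_nonneg_ae (ae_of_all _ hf0) hfm.aestronglyMeasurable
  have hZ0 : 0 ≤ ∫ ω, piC ω 0 ∂P := integral_nonneg fun ω => (piC_pos ω 0).le
  rw [hint, hlin, ENNReal.toReal_mul, ENNReal.toReal_inv, ENNReal.toReal_ofReal hZ0,
    inv_mul_eq_div]

set_option maxHeartbeats 1000000 in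
/-- (Non-degeneracy of the limiting Brownian motion)
Suppose `ℙ` satisfies the "usual conditions", `𝔼(∑_x ω_{0,x}|x|²) < ∞` and
`𝔼(1/ω_{0,ê_i}) < ∞` for `i = 1,…,d`.  Then there is `c > 0` such that
`E_ℚ E_ω^0[(λ·Ψ(ω,X_1))²] ≥ c|λ|²` for every `λ ∈ ℝ^d`, where `Ψ = x + χ` is the
harmonic coordinate. -/
theorem statement8 {d : ℕ} (P : Measure (Cfg d)) (hP : UsualConds P)
    (hmom : SecondMoment P)
    (hinvmom : ∀ i : Fin d, InvMoment P (unit i))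
    (χ : Cfg d → V d → Fin d → ℝ) (hχ : IsCorrector P χ) :
    ∃ c : ℝ, 0 < c ∧ ∀ lam : Fin d → ℝ,
      c * rnorm lam ^ 2 ≤
        ∫ ω, (∑' x, step ω 0 x * (∑ i, lam i * Psi χ ω x i) ^ 2) ∂(Qmeas P) := by
  haveI := hP.prob
  classical
  set Z : ℝ := ∫ ω, piC ω 0 ∂P with hZ
  have hZpos : 0 < Z := by
    rw [hZ, integral_pos_iff_support_of_nonneg_ae
      (ae_of_all _ fun ω => (piC_pos ω 0).le) hP.integ]
    have hsupp : Function.support (fun ω : Cfg d => piC ω 0) = Set.univ := by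
      ext ω; simp [Function.support, (piC_pos ω 0).ne']
    rw [hsupp]; simp
  set B : Fin d → ℝ≥0∞ := fun i => ∫⁻ ω, (ENNReal.ofReal (ω.w 0 (unit i)))⁻¹ ∂P with hB
  have hBfin : ∀ i, B i < ⊤ := fun i => hinvmom i
  set Sb : ℝ := (∑ i, (B i).toReal) + 1 with hSb
  have hSsum : 0 ≤ ∑ i, (B i).toReal := Finset.sum_nonneg fun i _ => ENNReal.toReal_nonneg
  have hSbpos : 0 < Sb := by rw [hSb]; linarith
  have hBle : ∀ i, (B i).toReal ≤ Sb := by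
    intro i
    have h1 : (B i).toReal ≤ ∑ j, (B j).toReal :=
      Finset.single_le_sum (fun j _ => ENNReal.toReal_nonneg) (Finset.mem_univ i)
    rw [hSb]; linarith
  refine ⟨(Sb * Z)⁻¹, by positivity, ?_⟩
  intro lam
  set sq : Cfg d → V d → ℝ := fun ω x => (∑ i, lam i * Psi χ ω x i) ^ 2 with hsq
  have hψm : ∀ (x : V d) (j : Fin d), Measurable fun ω => Psi χ ω x j := by
    intro x j
    simp only [Psi, Pi.add_apply]
    exact measurable_const.add ((measurable_pi_apply j).comp (hχ.1 x))
  have hsqm : ∀ x, Measurable fun ω => sq ω x := fun x =>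
    (Finset.measurable_sum _ fun j _ => measurable_const.mul (hψm x j)).pow_const 2
  have hsq0 : ∀ ω x, 0 ≤ sq ω x := fun ω x => sq_nonneg _
  set T : ℝ≥0∞ := ∫⁻ ω, ∑' x, ENNReal.ofReal (ω.w 0 x * sq ω x) ∂P with hTdef
  have hTle : T ≤ ENNReal.ofReal (∑ j, lam j ^ 2) * energy P (fun ω x => Psi χ ω x) :=
    T_le_energy P lam (fun ω x => Psi χ ω x)
  have hTfin : T < ⊤ :=
    lt_of_le_of_lt hTle (ENNReal.mul_lt_top ENNReal.ofReal_lt_top (energy_psi_lt_top hmom hχ))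
  have hI := integral_Q_eq hsqm hsq0 hTfin
  set A : Fin d → ℝ≥0∞ := fun i =>
    ∫⁻ ω, ENNReal.ofReal (ω.w 0 (unit i) * sq ω (unit i)) ∂P with hA
  have hAle : ∀ i, A i ≤ T := fun i =>
    lintegral_mono fun ω => ENNReal.le_tsum (unit i)
  have hAfin : ∀ i, A i < ⊤ := fun i => lt_of_le_of_lt (hAle i) hTfin
  -- per-coordinate bound
  have hcoord : ∀ i, lam i ^ 2 ≤ (A i).toReal * Sb := by
    intro i
    set h : Cfg d → ℝ := fun ω => ∑ j, lam j * Psi χ ω (unit i) j with hh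
    have hm : Measurable h :=
      Finset.measurable_sum _ fun j _ => measurable_const.mul (hψm (unit i) j)
    obtain ⟨hvi, hv0⟩ := corrector_mean_zero hP hχ (hinvmom i) lam
    have htoR : ∑ j, lam j * toR (unit i) j = lam i := by
      have : ∀ j, toR (unit i) j = if j = i then (1:ℝ) else 0 := by
        intro j; simp [toR, unit, apply_ite (fun z : ℤ => (z : ℝ))]
      simp only [this, mul_ite, mul_one, mul_zero, Finset.sum_ite_eq', Finset.mem_univ,
        if_true]
    have hsplit : ∀ ω, h ω = lam i + ∑ j, lam j * χ ω (unit i) j := by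
      intro ω
      rw [hh, ← htoR, ← Finset.sum_add_distrib]
      apply Finset.sum_congr rfl
      intro j _
      simp [Psi, Pi.add_apply, mul_add]
    have hinth : ∫ ω, h ω ∂P = lam i := by
      simp only [hsplit]
      rw [integral_add (integrable_const _) hvi, hv0, integral_const]
      simp
    have hhold := holder_key P (unit i) h hm (ae_w_pos (hinvmom i))
    have hAeq : (∫⁻ ω, ENNReal.ofReal (ω.w 0 (unit i) * h ω ^ 2) ∂P) = A i := rfl
    rw [hAeq] at hhold
    set X : ℝ≥0∞ := ∫⁻ ω, ENNReal.ofReal |h ω| ∂P with hX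
    have hABfin : A i * B i < ⊤ := ENNReal.mul_lt_top (hAfin i) (hBfin i)
    have hXfin : X < ⊤ := by
      by_contra hc
      rw [not_lt, top_le_iff] at hc
      rw [hc, ENNReal.top_pow (by norm_num)] at hhold
      exact hABfin.ne (top_le_iff.mp hhold)
    have habs : |lam i| ≤ X.toReal := by
      have := norm_integral_le_lintegral_norm (μ := P) h
      rw [hinth] at this
      simpa [Real.norm_eq_abs] using this
    calc lam i ^ 2 = |lam i| ^ 2 := (sq_abs _).symm
      _ ≤ X.toReal ^ 2 := pow_le_pow_left₀ (abs_nonneg _) habs 2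
      _ = (X ^ 2).toReal := by rw [ENNReal.toReal_pow]
      _ ≤ (A i * B i).toReal := ENNReal.toReal_mono hABfin.ne hhold
      _ = (A i).toReal * (B i).toReal := ENNReal.toReal_mul
      _ ≤ (A i).toReal * Sb :=
          mul_le_mul_of_nonneg_left (hBle i) ENNReal.toReal_nonneg
  -- sum the coordinate bounds
  have hsumA : ∑ i, A i ≤ T := by
    rw [hTdef]
    have hpt : ∀ ω : Cfg d, ∑ i, ENNReal.ofReal (ω.w 0 (unit i) * sq ω (unit i)) ≤
        ∑' x, ENNReal.ofReal (ω.w 0 x * sq ω x) := by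
      intro ω
      rw [← tsum_fintype (L := SummationFilter.unconditional _)]
      exact ENNReal.tsum_comp_le_tsum_of_injective unit_injective _
    calc ∑ i, A i
        = ∫⁻ ω, ∑ i, ENNReal.ofReal (ω.w 0 (unit i) * sq ω (unit i)) ∂P :=
          (lintegral_finset_sum _ fun i _ =>
            ((measurable_w 0 (unit i)).mul (hsqm (unit i))).ennreal_ofReal).symm
      _ ≤ _ := lintegral_mono hpt
  have hsum : ∑ i, lam i ^ 2 ≤ Sb * T.toReal := by
    calc ∑ i, lam i ^ 2 ≤ ∑ i, (A i).toReal * Sb := Finset.sum_le_sum fun i _ => hcoord i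
      _ = (∑ i, (A i).toReal) * Sb := (Finset.sum_mul _ _ _).symm
      _ ≤ T.toReal * Sb := by
          apply mul_le_mul_of_nonneg_right _ hSbpos.le
          rw [← ENNReal.toReal_sum (fun i _ => (hAfin i).ne)]
          exact ENNReal.toReal_mono hTfin.ne hsumA
      _ = Sb * T.toReal := mul_comm _ _
  -- conclude
  rw [show (fun ω => ∑' x, step ω 0 x * (∑ i, lam i * Psi χ ω x i) ^ 2) =
      fun ω => ∑' x, step ω 0 x * sq ω x from rfl] at *
  rw [hI, rnorm_sq]
  rw [div_eq_mul_inv]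
  calc (Sb * Z)⁻¹ * ∑ i, lam i ^ 2
      ≤ (Sb * Z)⁻¹ * (Sb * T.toReal) := by
        apply mul_le_mul_of_nonneg_left hsum (by positivity)
    _ = T.toReal * Z⁻¹ := by
        field_simp

end RCM
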